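/- Let a ∈ F and consider the assignment φ_a on divided powers given by φ_a((x^±_{α,r})^{(k)}) = Σ_{k₀+⋯+k_r = k} Π_{s=0}^{r} binom(r,s)^{k_s} (−a)^{k_s(r−s)} (x^±_{α,s})^{(k_s)}. Over a characteristic-zero field, the algebra automorphism of U(g[t]) induced by the Lie algebra automorphism x ⊗ t ↦ x ⊗ (t − a) acts on divided powers by exactly this formula, and in particular preserves the integral form U_ℤ(g[t]) when a ∈ ℤ. -/

import Mathlib

private lemma prod_smul_aux {K A ι : Type*} [CommSemiring K] [CommRing A] [Algebra K A]
    (s : Finset ι) (c : ι → K) (y : ι → A) :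
    ∏ i ∈ s, (c i • y i) = (∏ i ∈ s, c i) • ∏ i ∈ s, y i := by
  induction s using Finset.cons_induction with
  | empty => simp
  | cons a s ha ih =>
      rw [Finset.prod_cons, Finset.prod_cons, Finset.prod_cons, ih, smul_mul_smul_comm]

/-- The key commutative computation. -/
private lemma key_comm (K : Type*) [Field K] [CharZero K]
    (A : Type*) [CommRing A] [Algebra K A] (a : K) (Y : ℕ → A) (r k : ℕ) :
    (↑(k.factorial) : K)⁻¹ •
        (∑ s ∈ Finset.range (r + 1), ((r.choose s : K) * (-a) ^ (r - s)) • Y s) ^ k =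
      ∑ f ∈ Finset.Nat.antidiagonalTuple (r + 1) k,
        (∏ s : Fin (r + 1),
          ((r.choose (s : ℕ) : K) ^ (f s) * (-a) ^ (f s * (r - (s : ℕ))))) •
        ((List.finRange (r + 1)).map
          (fun s => ((↑((f s).factorial) : K)⁻¹ • Y (s : ℕ) ^ (f s)))).prod := by
  classical
  have hanti : Finset.Nat.antidiagonalTuple (r + 1) k =
      (Finset.univ : Finset (Fin (r + 1))).piAntidiag k := by
    ext f
    simp [Finset.Nat.mem_antidiagonalTuple, Finset.mem_piAntidiag]
  rw [← Fin.sum_univ_eq_sum_range (fun s => ((r.choose s : K) * (-a) ^ (r - s)) • Y s)]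
  rw [Finset.sum_pow_eq_sum_piAntidiag, hanti, Finset.smul_sum]
  refine Finset.sum_congr rfl fun f hf => ?_
  rw [Finset.mem_piAntidiag] at hf
  rw [← Fin.prod_univ_def]
  have hm : ((Nat.multinomial Finset.univ f : K)) *
      (∏ i : Fin (r + 1), ((f i).factorial : K)) = (k.factorial : K) := by
    rw [← Nat.cast_prod, ← Nat.cast_mul, mul_comm, Nat.multinomial_spec, hf.1]
  -- rewrite both sides
  simp only [smul_pow, prod_smul_aux]
  rw [← nsmul_eq_mul, ← Nat.cast_smul_eq_nsmul K, smul_smul, smul_smul, smul_smul]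
  congr 1
  have h1 : ∀ i : Fin (r + 1),
      ((r.choose (i : ℕ) : K) * (-a) ^ (r - (i : ℕ))) ^ (f i)
        = (r.choose (i : ℕ) : K) ^ (f i) * (-a) ^ (f i * (r - (i : ℕ))) := by
    intro i
    rw [mul_pow, ← pow_mul, mul_comm (r - (i : ℕ))]
  rw [Finset.prod_congr rfl fun i _ => h1 i]
  have hfac : (∏ i : Fin (r + 1), ((f i).factorial : K)) ≠ 0 := by
    apply Finset.prod_ne_zero_iff.2
    intro i _
    exact Nat.cast_ne_zero.2 (Nat.factorial_ne_zero _)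
  have hk : ((k.factorial : K)) ≠ 0 := Nat.cast_ne_zero.2 (Nat.factorial_ne_zero _)
  field_simp
  have hQ : (∏ x : Fin (r + 1), 1 / ((f x).factorial : K)) * (∏ i : Fin (r + 1), ((f i).factorial : K)) = 1 := by
    rw [← Finset.prod_mul_distrib]
    exact Finset.prod_eq_one fun i _ =>
      one_div_mul_cancel (Nat.cast_ne_zero.2 (Nat.factorial_ne_zero _))
  linear_combination (∏ s : Fin (r + 1), ((r.choose (s:ℕ) : K)) ^ (f s) * (-a) ^ (f s * (r - (s:ℕ)))) *
      (∏ x : Fin (r + 1), 1 / ((f x).factorial : K)) * hm -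
    ((Nat.multinomial Finset.univ f : K)) *
      (∏ s : Fin (r + 1), ((r.choose (s:ℕ) : K)) ^ (f s) * (-a) ^ (f s * (r - (s:ℕ)))) * hQ

theorem phi_a_on_divided_powers
    (K : Type) [Field K] [CharZero K]
    (U : Type) [Ring U] [Algebra K U]
    (a : K) (X : ℕ → U)
    (hcomm : ∀ r s : ℕ, X r * X s = X s * X r)
    (φ : U →ₐ[K] U)
    (hφ : ∀ r : ℕ, φ (X r) =
      ∑ s ∈ Finset.range (r + 1), ((r.choose s : K) * (-a) ^ (r - s)) • X s) :
    (∀ r k : ℕ,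
      φ ((↑(k.factorial) : K)⁻¹ • X r ^ k) =
        ∑ f ∈ Finset.Nat.antidiagonalTuple (r + 1) k,
          (∏ s : Fin (r + 1),
            ((r.choose (s : ℕ) : K) ^ (f s) * (-a) ^ (f s * (r - (s : ℕ))))) •
          ((List.finRange (r + 1)).map
            (fun s => ((↑((f s).factorial) : K)⁻¹ • X (s : ℕ) ^ (f s)))).prod) ∧
    (∀ n : ℤ, a = (n : K) →
      ∀ u ∈ Subring.closure {y : U | ∃ r k : ℕ, y = (↑(k.factorial) : K)⁻¹ • X r ^ k},
        φ u ∈ Subring.closure {y : U | ∃ r k : ℕ, y = (↑(k.factorial) : K)⁻¹ • X r ^ k}) := by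
  classical
  -- commutative subalgebra generated by the `X r`
  letI : CommRing (Algebra.adjoin K (Set.range X)) :=
    Algebra.adjoinCommRingOfComm K (by
      rintro _ ⟨r, rfl⟩ _ ⟨s, rfl⟩
      exact hcomm r s)
  let Y : ℕ → Algebra.adjoin K (Set.range X) :=
    fun r => ⟨X r, Algebra.subset_adjoin ⟨r, rfl⟩⟩
  have hval : ∀ r, (Algebra.adjoin K (Set.range X)).val (Y r) = X r := fun r => rfl
  have main : ∀ r k : ℕ,
      φ ((↑(k.factorial) : K)⁻¹ • X r ^ k) =
        ∑ f ∈ Finset.Nat.antidiagonalTuple (r + 1) k,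
          (∏ s : Fin (r + 1),
            ((r.choose (s : ℕ) : K) ^ (f s) * (-a) ^ (f s * (r - (s : ℕ))))) •
          ((List.finRange (r + 1)).map
            (fun s => ((↑((f s).factorial) : K)⁻¹ • X (s : ℕ) ^ (f s)))).prod := by
    intro r k
    have := congrArg (Algebra.adjoin K (Set.range X)).val
      (key_comm K (Algebra.adjoin K (Set.range X)) a Y r k)
    simp only [map_smul, map_pow, map_sum, map_list_prod, List.map_map, Function.comp_def,
      hval] at this
    rw [map_smul, map_pow, hφ r]
    exact this
  refine ⟨main, ?_⟩
  intro n hn u hu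
  induction hu using Subring.closure_induction with
  | mem x hx =>
      obtain ⟨r, k, rfl⟩ := hx
      rw [main r k]
      apply Subring.sum_mem
      intro f hf
      have hcoef : (∏ s : Fin (r + 1),
          ((r.choose (s : ℕ) : K) ^ (f s) * (-a) ^ (f s * (r - (s : ℕ)))))
          = ((∏ s : Fin (r + 1),
              ((r.choose (s : ℕ) : ℤ) ^ (f s) * (-n) ^ (f s * (r - (s : ℕ))))) : ℤ) := by
        rw [hn]; push_cast; ring
      rw [hcoef, Int.cast_smul_eq_zsmul]
      apply Subring.zsmul_mem
      apply Subring.list_prod_mem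
      intro x hx
      simp only [List.mem_map] at hx
      obtain ⟨s, -, rfl⟩ := hx
      exact Subring.subset_closure ⟨(s : ℕ), f s, rfl⟩
  | zero => rw [map_zero]; exact Subring.zero_mem _
  | one => rw [map_one]; exact Subring.one_mem _
  | add x y _ _ hx hy => rw [map_add]; exact Subring.add_mem _ hx hy
  | neg x _ hx => rw [map_neg]; exact Subring.neg_mem _ hx
  | mul x y _ _ hx hy => rw [map_mul]; exact Subring.mul_mem _ hx hy
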